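/- arXiv:1410.5671 — 3 statements merged into one kernel-verified Lean document; each statement's English description precedes it below -/
import Mathlib

section
/- Let G be a finite group acting on a finite nonempty set X such that every element g ∈ G fixes some point of X, but no point of X is fixed by all of G. Then G is not cyclic, and the action of G on X is not transitive. -/
theorem not_cyclic_and_not_transitive_of_pointwise_fixed
    (G X : Type*) [Group G] [Fintype G] [Fintype X] [Nonempty X] [MulAction G X]
    (hfix : ∀ g : G, ∃ x : X, g • x = x)
    (hnofix : ¬ ∃ x : X, ∀ g : G, g • x = x) :
    ¬ IsCyclic G ∧ ¬ (∀ x y : X, ∃ g : G, g • x = y) := by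
  constructor
  · rintro ⟨g, hg⟩
    obtain ⟨x, hx⟩ := hfix g
    refine hnofix ⟨x, fun a => ?_⟩
    obtain ⟨n, rfl⟩ := hg a
    have : g ∈ MulAction.stabilizer G x := hx
    exact (Subgroup.zpow_mem _ this n : _)
  · intro htrans
    -- X has at least 2 elements
    have h2 : 2 ≤ Fintype.card X := by
      by_contra h
      push_neg at h
      interval_cases hc : Fintype.card X
      · exact (Fintype.card_ne_zero (α := X)) hc
      · obtain ⟨x⟩ := ‹Nonempty X›
        refine hnofix ⟨x, fun g => ?_⟩
        have := Fintype.card_le_one_iff.mp (le_of_eq hc)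
        exact this _ _
    haveI : MulAction.IsPretransitive G X := ⟨fun x y => htrans x y⟩
    classical
    haveI : ∀ g : G, Fintype (MulAction.fixedBy X g) := fun g => Fintype.ofFinite _
    haveI : Fintype (MulAction.orbitRel.Quotient G X) := Fintype.ofFinite _
    have hΩ : Fintype.card (MulAction.orbitRel.Quotient G X) = 1 := by
      rw [Fintype.card_eq_one_iff]
      obtain ⟨x⟩ := ‹Nonempty X›
      refine ⟨⟦x⟧, fun q => ?_⟩
      induction q using Quotient.inductionOn with
      | h y =>
        exact Quotient.sound (htrans x y)
    have hB := MulAction.sum_card_fixedBy_eq_card_orbits_mul_card_group G X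
    rw [hΩ, one_mul] at hB
    -- each term ≥ 1, and term at 1 is card X ≥ 2
    have hone : Fintype.card (MulAction.fixedBy X (1 : G)) = Fintype.card X := by
      apply Fintype.card_of_finset'
      intro x
      simp [MulAction.fixedBy]
    have hge : ∀ g : G, 1 ≤ Fintype.card (MulAction.fixedBy X g) := by
      intro g
      obtain ⟨x, hx⟩ := hfix g
      exact Fintype.card_pos_iff.mpr ⟨⟨x, hx⟩⟩
    have hsplit := Finset.sum_erase_add Finset.univ (fun g => Fintype.card (MulAction.fixedBy X g)) (Finset.mem_univ (1 : G))
    have hle : ∑ g ∈ Finset.univ.erase (1 : G), 1 ≤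
        ∑ g ∈ Finset.univ.erase (1 : G), Fintype.card (MulAction.fixedBy X g) :=
      Finset.sum_le_sum fun g _ => hge g
    have hcard : (Finset.univ.erase (1 : G)).card = Fintype.card G - 1 := by
      rw [Finset.card_erase_of_mem (Finset.mem_univ _), Finset.card_univ]
    rw [Finset.sum_const, smul_eq_mul, mul_one, hcard] at hle
    have hG : 1 ≤ Fintype.card G := Fintype.card_pos
    rw [hone] at hsplit
    omega
end

section
/- Let a be an integer which is not a perfect square. Then there exist infinitely many primes p such that a is not a quadratic residue modulo p. -/
open ZMod
open scoped NumberTheorySymbols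

private lemma coprime_of_modEq_one {b k : ℕ} (h : b ≡ 1 [MOD k]) : Nat.Coprime b k := by
  unfold Nat.Coprime
  rw [Nat.gcd_comm, Nat.gcd_rec, h, ← Nat.gcd_rec, Nat.gcd_one_right]

private lemma coprime_two_of_odd {b : ℕ} (hb : b % 2 = 1) : Nat.Coprime b 2 :=
  (Nat.prime_two.coprime_iff_not_dvd.mpr (by omega)).symm

private lemma coprime_helper {b n : ℕ} (hb2 : b % 2 = 1)
    (hbk : Nat.Coprime b (ordCompl[2] n)) : Nat.Coprime b (8 * n) := by
  have hb2' : Nat.Coprime b 2 := coprime_two_of_odd hb2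
  have h8 : Nat.Coprime b 8 := by
    have := hb2'.pow_right 3
    norm_num at this
    exact this
  refine h8.mul_right ?_
  have hv : Nat.Coprime b (2 ^ n.factorization 2) := hb2'.pow_right _
  have := hv.mul_right hbk
  rwa [Nat.ordProj_mul_ordCompl_eq_self n 2] at this

private lemma exists_jacobi_neg (a : ℤ) (ha0 : a ≠ 0) (ha : ¬ ∃ x : ℤ, x ^ 2 = a) :
    ∃ b : ℕ, Nat.Coprime b (8 * a.natAbs) ∧ J(a | b) = -1 := by
  obtain ⟨s, t, hst, hs⟩ := Nat.sq_mul_squarefree a.natAbs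
  have hA0 : a.natAbs ≠ 0 := Int.natAbs_ne_zero.mpr ha0
  have hs0 : s ≠ 0 := by rintro rfl; simp at hst; omega
  have ht0 : t ≠ 0 := by rintro rfl; simp at hst; omega
  have htA : t ∣ a.natAbs := ⟨t * s, by rw [← hst]; ring⟩
  have hsA : s ∣ a.natAbs := ⟨t ^ 2, by rw [← hst]; ring⟩
  set k := ordCompl[2] a.natAbs with hk
  have hk0 : k ≠ 0 := (Nat.ordCompl_pos 2 hA0).ne'
  have hk2 : ¬ 2 ∣ k := Nat.not_dvd_ordCompl Nat.prime_two hA0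
  set m := ordCompl[2] s with hm
  have hm_dvd : m ∣ s := Nat.ordCompl_dvd s 2
  have hmsf : Squarefree m := hs.squarefree_of_dvd hm_dvd
  have hm2 : ¬ 2 ∣ m := Nat.not_dvd_ordCompl Nat.prime_two hs0
  have h2fm : 2 ^ s.factorization 2 * m = s := Nat.ordProj_mul_ordCompl_eq_self s 2
  have ht8A : t ∣ 8 * a.natAbs := htA.trans (dvd_mul_left _ 8)
  by_cases hm1 : m = 1
  · -- s is 1 or 2
    rw [hm1, mul_one] at h2fm
    have hf1 : s.factorization 2 ≤ 1 := by
      by_contra hf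
      have h4 : 2 * 2 ∣ s := by
        rw [← h2fm, (by norm_num : (2 * 2 : ℕ) = 2 ^ 2)]
        exact pow_dvd_pow 2 (by omega)
      exact Nat.prime_two.not_isUnit (hs 2 h4)
    have hs12 : s = 1 ∨ s = 2 := by
      rcases Nat.le_one_iff_eq_zero_or_eq_one.mp hf1 with h | h <;>
        rw [← h2fm, h] <;> simp
    have co2k : Nat.Coprime 2 k := Nat.prime_two.coprime_iff_not_dvd.mpr hk2
    have co8k : Nat.Coprime 8 k := by
      have := co2k.pow_left 3
      norm_num at this
      exact this
    have key : ∀ r : ℕ, r % 2 = 1 → r < 8 →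
        ∃ b : ℕ, b % 8 = r ∧ Nat.Coprime b (8 * a.natAbs) ∧ Int.gcd (t : ℤ) (b : ℤ) = 1 ∧
          Odd b ∧ b % 2 = 1 := by
      intro r hr hr8
      obtain ⟨b, hb8, hbk⟩ := Nat.chineseRemainder co8k r 1
      have hb8' : b % 8 = r := by
        have h : b % 8 = r % 8 := hb8
        omega
      have hb2 : b % 2 = 1 := by omega
      have hcop : Nat.Coprime b (8 * a.natAbs) :=
        coprime_helper hb2 (coprime_of_modEq_one hbk)
      have hbt : Nat.Coprime t b := (hcop.coprime_dvd_right ht8A).symm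
      exact ⟨b, hb8', hcop, by rwa [Int.gcd_natCast_natCast], Nat.odd_iff.mpr hb2, hb2⟩
    rcases hs12 with rfl | rfl
    · -- s = 1 : a must be negative
      rcases Int.natAbs_eq a with hsign | hsign
      · exact absurd ⟨(t : ℤ), by rw [hsign, ← hst]; push_cast; ring⟩ ha
      obtain ⟨b, hb8, hcop, hgt, hob, hb2⟩ := key 3 (by norm_num) (by norm_num)
      refine ⟨b, hcop, ?_⟩
      have ha' : a = (-1) * (t : ℤ) ^ 2 := by rw [hsign, ← hst]; push_cast; ring
      rw [ha', jacobiSym.mul_left, jacobiSym.at_neg_one hob, jacobiSym.sq_one' hgt,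
        ZMod.χ₄_nat_three_mod_four (by omega : b % 4 = 3)]
      ring
    · -- s = 2
      rcases Int.natAbs_eq a with hsign | hsign
      · obtain ⟨b, hb8, hcop, hgt, hob, hb2⟩ := key 3 (by norm_num) (by norm_num)
        refine ⟨b, hcop, ?_⟩
        have ha' : a = 2 * (t : ℤ) ^ 2 := by rw [hsign, ← hst]; push_cast; ring
        rw [ha', jacobiSym.mul_left, jacobiSym.at_two hob, jacobiSym.sq_one' hgt]
        rw [ZMod.χ₈_nat_eq_if_mod_eight]
        simp [hb8, hb2]
      · obtain ⟨b, hb8, hcop, hgt, hob, hb2⟩ := key 5 (by norm_num) (by norm_num)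
        refine ⟨b, hcop, ?_⟩
        have ha' : a = (-2) * (t : ℤ) ^ 2 := by rw [hsign, ← hst]; push_cast; ring
        rw [ha', jacobiSym.mul_left, jacobiSym.at_neg_two hob, jacobiSym.sq_one' hgt]
        rw [ZMod.χ₈'_nat_eq_if_mod_eight]
        simp [hb8, hb2]
  · -- m > 1 : there is an odd prime dividing s to the first power
    have hm0 : m ≠ 0 := (Nat.ordCompl_pos 2 hs0).ne'
    set l := m.minFac with hldef
    have hlp : l.Prime := Nat.minFac_prime hm1
    have hlm : l ∣ m := Nat.minFac_dvd m
    have hl2 : l ≠ 2 := fun h => hm2 (h ▸ hlm)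
    haveI : Fact l.Prime := ⟨hlp⟩
    obtain ⟨u, hu⟩ := FiniteField.exists_nonsquare (F := ZMod l)
      (by rwa [ZMod.ringChar_zmod_n])
    have hu0 : u ≠ 0 := fun h => hu (h ▸ ⟨0, by norm_num⟩)
    have huval : u.val ≠ 0 := fun h => hu0 ((ZMod.val_eq_zero u).mp h)
    set m' := m / l with hm'def
    have hlm' : l * m' = m := Nat.mul_div_cancel' hlm
    have hm'0 : m' ≠ 0 := fun h => hm0 (by rw [← hlm', h, mul_zero])
    have hm'm : m' ∣ m := Dvd.intro_left l hlm'
    have hlnd : ¬ l ∣ m' := fun h =>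
      hlp.not_isUnit (hmsf l (by rw [← hlm']; exact mul_dvd_mul_left l h))
    set k2 := ordCompl[l] k with hk2def
    have hk20 : k2 ≠ 0 := (Nat.ordCompl_pos l hk0).ne'
    have hlk2 : ¬ l ∣ k2 := Nat.not_dvd_ordCompl hlp hk0
    have hm'A : m' ∣ a.natAbs := hm'm.trans (hm_dvd.trans hsA)
    have hm'2 : ¬ 2 ∣ m' := fun h => hm2 (h.trans hm'm)
    have hm'k : m' ∣ k := by
      have h1 : m' ∣ 2 ^ a.natAbs.factorization 2 * k := by
        rw [Nat.ordProj_mul_ordCompl_eq_self]; exact hm'A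
      exact ((Nat.prime_two.coprime_iff_not_dvd.mpr hm'2).symm.pow_right _).dvd_of_dvd_mul_left h1
    have hm'k2 : m' ∣ k2 := by
      have h1 : m' ∣ l ^ k.factorization l * k2 := by
        rw [Nat.ordProj_mul_ordCompl_eq_self]; exact hm'k
      exact ((hlp.coprime_iff_not_dvd.mpr hlnd).symm.pow_right _).dvd_of_dvd_mul_left h1
    -- construct b by CRT
    have colk2 : Nat.Coprime l k2 := hlp.coprime_iff_not_dvd.mpr hlk2
    obtain ⟨c, hcl, hck⟩ := Nat.chineseRemainder colk2 u.val 1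
    have h2lk2 : ¬ 2 ∣ l * k2 := by
      rw [Nat.prime_two.dvd_mul]
      push_neg
      exact ⟨fun h => hl2 ((Nat.prime_dvd_prime_iff_eq Nat.prime_two hlp).mp h).symm,
        fun h => hk2 (h.trans (Nat.ordCompl_dvd k l))⟩
    have co8 : Nat.Coprime 8 (l * k2) := by
      have := (Nat.prime_two.coprime_iff_not_dvd.mpr h2lk2).pow_left 3
      norm_num at this
      exact this
    obtain ⟨b, hb8, hbc⟩ := Nat.chineseRemainder co8 1 c
    have hbl : b ≡ u.val [MOD l] := (hbc.of_dvd (dvd_mul_right l k2)).trans hcl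
    have hbk2 : b ≡ 1 [MOD k2] := (hbc.of_dvd (dvd_mul_left k2 l)).trans hck
    have hb8' : b % 8 = 1 := by
      have h : b % 8 = 1 % 8 := hb8
      omega
    have hb2 : b % 2 = 1 := by omega
    have hb4 : b % 4 = 1 := by omega
    have hob : Odd b := Nat.odd_iff.mpr hb2
    -- coprimality
    have hbl' : Nat.Coprime b l := by
      refine (hlp.coprime_iff_not_dvd.mpr fun h => ?_).symm
      have hb0 : b % l = 0 := Nat.eq_zero_of_dvd_of_lt ((Nat.dvd_mod_iff (dvd_refl l)).mpr h) (Nat.mod_lt b hlp.pos)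
      have h1 : u.val % l = u.val := Nat.mod_eq_of_lt (ZMod.val_lt u)
      have h2 : b % l = u.val % l := hbl
      omega
    have hbk' : Nat.Coprime b k := by
      have : Nat.Coprime b (l ^ k.factorization l * k2) :=
        (hbl'.pow_right _).mul_right (coprime_of_modEq_one hbk2)
      rwa [Nat.ordProj_mul_ordCompl_eq_self] at this
    have hcop : Nat.Coprime b (8 * a.natAbs) := coprime_helper hb2 hbk'
    refine ⟨b, hcop, ?_⟩
    have hbt : Nat.Coprime t b := (hcop.coprime_dvd_right ht8A).symm
    have hgt : Int.gcd (t : ℤ) (b : ℤ) = 1 := by rwa [Int.gcd_natCast_natCast]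
    have hmodd : Odd m := Nat.odd_iff.mpr (by omega)
    haveI : NeZero m' := ⟨hm'0⟩
    haveI : NeZero l := ⟨hlp.ne_zero⟩
    -- J(m | b) = -1
    have hJm : J((m : ℤ) | b) = -1 := by
      rw [jacobiSym.quadratic_reciprocity_one_mod_four' hmodd hb4]
      rw [← hlm', jacobiSym.mul_right]
      have h1 : J((b : ℤ) | m') = 1 := by
        have hbm' : b % m' = 1 % m' := hbk2.of_dvd hm'k2
        rw [jacobiSym.mod_left' (by exact_mod_cast hbm' : (b : ℤ) % m' = (1 : ℤ) % m')]
        exact jacobiSym.one_left m'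
      have h2 : J((b : ℤ) | l) = -1 := by
        have hbl2 : b % l = u.val % l := hbl
        rw [jacobiSym.mod_left' (by exact_mod_cast hbl2 : (b : ℤ) % l = ((u.val : ℤ)) % l)]
        rw [← jacobiSym.legendreSym.to_jacobiSym]
        refine (legendreSym.eq_neg_one_iff' l).mpr ?_
        simpa [ZMod.natCast_val, ZMod.cast_id] using hu
      rw [h1, h2]
      ring
    have hJ2f : J((2 : ℤ) ^ s.factorization 2 | b) = 1 := by
      rw [jacobiSym.pow_left, jacobiSym.at_two hob, ZMod.χ₈_nat_eq_if_mod_eight]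
      simp [hb8', hb2]
    have hA' : a.natAbs = t ^ 2 * (2 ^ s.factorization 2 * m) := by rw [h2fm, hst]
    rcases Int.natAbs_eq a with hsign | hsign
    · have ha' : a = (t : ℤ) ^ 2 * ((2 : ℤ) ^ s.factorization 2 * (m : ℤ)) := by
        rw [hsign, hA']; push_cast; ring
      rw [ha', jacobiSym.mul_left, jacobiSym.sq_one' hgt, jacobiSym.mul_left, hJ2f, hJm]
      ring
    · have ha' : a = (-1) * ((t : ℤ) ^ 2 * ((2 : ℤ) ^ s.factorization 2 * (m : ℤ))) := by
        rw [hsign, hA']; push_cast; ring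
      rw [ha', jacobiSym.mul_left, jacobiSym.mul_left, jacobiSym.sq_one' hgt,
        jacobiSym.mul_left, hJ2f, hJm, jacobiSym.at_neg_one hob,
        ZMod.χ₄_nat_one_mod_four hb4]
      ring

theorem infinitely_many_nonresidues (a : ℤ) (ha : ¬ ∃ x : ℤ, x ^ 2 = a) :
    {p : ℕ | p.Prime ∧ ¬ ∃ x : ZMod p, x ^ 2 = (a : ZMod p)}.Infinite := by
  have ha0 : a ≠ 0 := by rintro rfl; exact ha ⟨0, by norm_num⟩
  obtain ⟨b, hcop, hJ⟩ := exists_jacobi_neg a ha0 ha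
  set N := 8 * a.natAbs with hN
  haveI : NeZero N := ⟨by have := Int.natAbs_ne_zero.mpr ha0; positivity⟩
  have hunit : IsUnit (b : ZMod N) := (ZMod.isUnit_iff_coprime b N).mpr hcop
  refine (Nat.infinite_setOfPred_prime_and_eq_mod hunit).mono ?_
  rintro p ⟨hp, hpb⟩
  have hmod : p ≡ b [MOD N] := (ZMod.natCast_eq_natCast_iff p b N).mp hpb
  have hb2 : b % 2 = 1 := by
    have h2 : Nat.Coprime b 2 := hcop.coprime_dvd_right ⟨4 * a.natAbs, by ring⟩
    rw [Nat.coprime_comm, Nat.prime_two.coprime_iff_not_dvd] at h2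
    omega
  have hp2 : p % 2 = 1 := by
    have : p ≡ b [MOD 2] := hmod.of_dvd ⟨4 * a.natAbs, by ring⟩
    unfold Nat.ModEq at this; omega
  have hJp : J(a | p) = -1 := by
    rw [jacobiSym.mod_right a (Nat.odd_iff.mpr hp2)]
    have h4 : p % (4 * a.natAbs) = b % (4 * a.natAbs) := hmod.of_dvd ⟨2, by ring⟩
    rw [h4, ← jacobiSym.mod_right a (Nat.odd_iff.mpr hb2), hJ]
  refine ⟨hp, fun ⟨x, hx⟩ => ?_⟩
  exact ZMod.nonsquare_of_jacobiSym_eq_neg_one hJp ⟨x, by rw [← hx]; ring⟩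
end

section
/- Let p be a prime with p ≡ 1 (mod 25). Then for every prime l ≠ 5, at least one of the following congruences is solvable: x^2 ≡ 5 (mod l), or x^5 ≡ p (mod l). -/
theorem local_solubility_quintic_example (p l : ℕ) (hp : p.Prime) (hl : l.Prime)
    (hmod : p % 25 = 1) (hne : l ≠ 5) :
    (∃ x : ZMod l, x ^ 2 = 5) ∨ (∃ x : ZMod l, x ^ 5 = (p : ZMod l)) := by
  haveI : Fact l.Prime := ⟨hl⟩
  haveI : Fact (Nat.Prime 5) := ⟨by norm_num⟩
  by_cases h5 : l % 5 = 1
  · left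
    have hl2 : l ≠ 2 := by intro h; rw [h] at h5; norm_num at h5
    have hsq : IsSquare ((5 : ℕ) : ZMod l) := by
      rw [← ZMod.exists_sq_eq_prime_iff_of_mod_four_eq_one (p := 5) (by norm_num) hl2]
      have : ((l : ℕ) : ZMod 5) = 1 := by
        rw [← ZMod.natCast_mod l 5, h5]; norm_num
      rw [this]
      exact IsSquare.one
    obtain ⟨x, hx⟩ := hsq
    exact ⟨x, by rw [sq, ← hx]; norm_num⟩
  · right
    by_cases hpl : (p : ZMod l) = 0
    · exact ⟨0, by rw [hpl]; ring⟩
    · have hcop : (Nat.card (ZMod l)ˣ).Coprime 5 := by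
        rw [Nat.card_eq_fintype_card, ZMod.card_units_eq_totient, Nat.totient_prime hl]
        rw [Nat.coprime_comm]
        rw [(by norm_num : Nat.Prime 5).coprime_iff_not_dvd]
        intro ⟨k, hk⟩
        have := hl.two_le
        omega
      set u : (ZMod l)ˣ := ZMod.unitOfCoprime p (by
        rw [Nat.coprime_comm, hl.coprime_iff_not_dvd]
        intro hdvd
        exact hpl ((ZMod.natCast_eq_zero_iff p l).mpr hdvd)) with hu
      obtain ⟨v, hv⟩ := (powCoprime hcop).surjective u
      refine ⟨(v : ZMod l), ?_⟩
      have : ((v ^ 5 : (ZMod l)ˣ) : ZMod l) = (u : ZMod l) := by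
        rw [← powCoprime_apply hcop, hv]
      simpa [hu, ZMod.coe_unitOfCoprime] using this
end
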